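/- Let I, J ∈ ℍ satisfy I² = −1, J² = −1 and IJ = −JI. Let q ∈ ℍ with ‖q‖ < 1 and q ∈ ℂ_I (i.e. q = x + yI with x, y ∈ ℝ), and let α = α₁ + α₂·J and β = β₁ + β₂·J with α₁, α₂, β₁, β₂ in the real span of {1, I}. Then G_q(α, β) = Re(α · conj(β)) / (1 − ‖q‖²)² + 4 · ‖Im(q)‖² · Re((α₂J) · (β₂J)) / (‖1 − q²‖² · (1 − ‖q‖²)²). -/

import Mathlib

open Quaternion

lemma coe_eq_smul_one (r : ℝ) : (r : Quaternion ℝ) = r • (1 : Quaternion ℝ) := by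
  rw [← Quaternion.coe_one, Quaternion.smul_coe, mul_one]

lemma slice_mul (I : Quaternion ℝ) (hII : I * I = -1) (a b c d : ℝ) :
    ((a:Quaternion ℝ) + b • I) * ((c:Quaternion ℝ) + d • I)
      = ((a*c - b*d : ℝ) : Quaternion ℝ) + (a*d + b*c) • I := by
  simp only [mul_add, add_mul, Quaternion.coe_mul_eq_smul, Quaternion.mul_coe_eq_smul,
    smul_mul_assoc, mul_smul_comm, smul_smul, hII, coe_eq_smul_one, smul_neg, one_mul, mul_one]
  module

lemma re_zero_of_mul_self (u : Quaternion ℝ) (h : u * u = -1) : u.re = 0 := by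
  have h0 : (u*u).re = -1 := by rw [h]; simp
  have h1 : (u*u).imI = 0 := by rw [h]; simp
  have h2 : (u*u).imJ = 0 := by rw [h]; simp
  have h3 : (u*u).imK = 0 := by rw [h]; simp
  rw [Quaternion.re_mul] at h0
  rw [Quaternion.imI_mul] at h1
  rw [Quaternion.imJ_mul] at h2
  rw [Quaternion.imK_mul] at h3
  have key : u.re * (u.re^2 + 1) = 0 := by
    linear_combination u.re * h0 + u.imI / 2 * h1 + u.imJ / 2 * h2 + u.imK / 2 * h3
  rcases mul_eq_zero.mp key with h | h
  · exact h
  · nlinarith [sq_nonneg u.re]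

lemma slice_star_rep (I : Quaternion ℝ) (hsI : star I = -I) (a b : ℝ) :
    star ((a:Quaternion ℝ) + b • I) = (a:Quaternion ℝ) + (-b) • I := by
  simp [star_add, Quaternion.star_smul, hsI, neg_smul, smul_neg]

def InSlice (I c : Quaternion ℝ) : Prop := ∃ a b : ℝ, c = (a : Quaternion ℝ) + b • I

lemma InSlice.mul {I : Quaternion ℝ} (hII : I * I = -1) {c d : Quaternion ℝ}
    (hc : InSlice I c) (hd : InSlice I d) : InSlice I (c * d) := by
  obtain ⟨a, b, rfl⟩ := hc; obtain ⟨a', b', rfl⟩ := hd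
  exact ⟨_, _, slice_mul I hII a b a' b'⟩

lemma InSlice.comm {I : Quaternion ℝ} (hII : I * I = -1) {c d : Quaternion ℝ}
    (hc : InSlice I c) (hd : InSlice I d) : c * d = d * c := by
  obtain ⟨a, b, rfl⟩ := hc; obtain ⟨a', b', rfl⟩ := hd
  rw [slice_mul I hII, slice_mul I hII]; ring_nf

lemma InSlice.star' {I : Quaternion ℝ} (hsI : star I = -I) {c : Quaternion ℝ}
    (hc : InSlice I c) : InSlice I (star c) := by
  obtain ⟨a, b, rfl⟩ := hc; exact ⟨_, _, slice_star_rep I hsI a b⟩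

lemma slice_J {I J : Quaternion ℝ} (hsI : star I = -I) (hJI : J * I = -(I * J))
    {c : Quaternion ℝ} (hc : InSlice I c) : J * c = star c * J := by
  obtain ⟨a, b, rfl⟩ := hc
  simp only [star_add, Quaternion.star_smul, Quaternion.star_coe, hsI]
  simp only [mul_add, add_mul, Quaternion.coe_mul_eq_smul, Quaternion.mul_coe_eq_smul,
    mul_smul_comm, smul_mul_assoc, hJI, smul_neg, neg_smul, neg_mul]

lemma slice_re_mul_J {I J : Quaternion ℝ} (hJre : J.re = 0) (hIJre : (I * J).re = 0)
    {c : Quaternion ℝ} (hc : InSlice I c) : (c * J).re = 0 := by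
  obtain ⟨a, b, rfl⟩ := hc
  simp [add_mul, smul_mul_assoc, Quaternion.coe_mul_eq_smul, Quaternion.re_add,
    Quaternion.re_smul, hJre, hIJre]

lemma slice_normSq (I : Quaternion ℝ) (hII : I * I = -1) (hsI : star I = -I) (a b : ℝ) :
    normSq ((a:Quaternion ℝ) + b • I) = a^2 + b^2 := by
  have h := Quaternion.self_mul_star ((a:Quaternion ℝ) + b • I)
  rw [slice_star_rep I hsI, slice_mul I hII,
    show (a * a - b * -b : ℝ) = a^2 + b^2 by ring,
    show (a * -b + b * a : ℝ) = 0 by ring, zero_smul, add_zero] at h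
  exact (Quaternion.coe_injective h).symm

lemma InSlice.sub {I : Quaternion ℝ} {c d : Quaternion ℝ}
    (hc : InSlice I c) (hd : InSlice I d) : InSlice I (c - d) := by
  obtain ⟨a, b, rfl⟩ := hc; obtain ⟨a', b', rfl⟩ := hd
  refine ⟨a - a', b - b', ?_⟩
  push_cast
  rw [sub_smul]
  abel

lemma InSlice.one {I : Quaternion ℝ} : InSlice I 1 :=
  ⟨1, 0, by simp⟩

/-- The slice Riemannian metric of the quaternionic unit ball. -/
noncomputable def sliceRiemannian (q α β : Quaternion ℝ) : ℝ :=
  ((α - q * α * q) * star (β - q * β * q)).re / (‖1 - q ^ 2‖ ^ 2 * (1 - ‖q‖ ^ 2) ^ 2)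

set_option maxHeartbeats 2000000 in
/-- for `q ∈ 𝔹 ∩ ℂ_I` and `α = α₁ + α₂J`, `β = β₁ + β₂J` with components in
`ℂ_I`, the slice Riemannian metric decomposes as the hyperbolic metric plus a perturbation:
`G_q(α, β) = Re(α conj β)/(1 − ‖q‖²)² + 4‖Im q‖² Re((α₂J)(β₂J))/(‖1 − q²‖²(1 − ‖q‖²)²)`. -/
theorem sliceRiemannian_slice_decomposition (I J : Quaternion ℝ)
    (hI : I ^ 2 = -1) (hJ : J ^ 2 = -1) (hIJ : I * J = -(J * I))
    (q : Quaternion ℝ) (hqnorm : ‖q‖ < 1) (x y : ℝ) (hq : q = (x : Quaternion ℝ) + y • I)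
    (α₁ α₂ β₁ β₂ : Quaternion ℝ)
    (hα₁ : α₁ ∈ Submodule.span ℝ ({1, I} : Set (Quaternion ℝ)))
    (hα₂ : α₂ ∈ Submodule.span ℝ ({1, I} : Set (Quaternion ℝ)))
    (hβ₁ : β₁ ∈ Submodule.span ℝ ({1, I} : Set (Quaternion ℝ)))
    (hβ₂ : β₂ ∈ Submodule.span ℝ ({1, I} : Set (Quaternion ℝ)))
    (α β : Quaternion ℝ) (hα : α = α₁ + α₂ * J) (hβ : β = β₁ + β₂ * J) :
    sliceRiemannian q α β =
      (α * star β).re / (1 - ‖q‖ ^ 2) ^ 2 +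
        4 * ‖q.im‖ ^ 2 * ((α₂ * J) * (β₂ * J)).re /
          (‖1 - q ^ 2‖ ^ 2 * (1 - ‖q‖ ^ 2) ^ 2) := by
  have hII : I * I = -1 := by rw [← pow_two]; exact hI
  have hJJ : J * J = -1 := by rw [← pow_two]; exact hJ
  have hIre : I.re = 0 := re_zero_of_mul_self I hII
  have hJre : J.re = 0 := re_zero_of_mul_self J hJJ
  have hsI : star I = -I := QuaternionAlgebra.star_eq_neg.mpr hIre
  have hsJ : star J = -J := QuaternionAlgebra.star_eq_neg.mpr hJre
  have hJI : J * I = -(I * J) := by rw [hIJ, neg_neg]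
  have hIJre : (I * J).re = 0 := by
    have h1 : (I * J).re = (J * I).re := by simp [Quaternion.re_mul]; ring
    rw [hJI, Quaternion.re_neg] at h1
    linarith
  -- representations
  rw [Submodule.mem_span_pair] at hα₁ hα₂ hβ₁ hβ₂
  obtain ⟨a1, a2, ha⟩ := hα₁
  obtain ⟨a3, a4, ha'⟩ := hα₂
  obtain ⟨b1, b2, hb⟩ := hβ₁
  obtain ⟨b3, b4, hb'⟩ := hβ₂
  have Rα₁ : InSlice I α₁ := ⟨a1, a2, by rw [← ha, coe_eq_smul_one]⟩
  have Rα₂ : InSlice I α₂ := ⟨a3, a4, by rw [← ha', coe_eq_smul_one]⟩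
  have Rβ₁ : InSlice I β₁ := ⟨b1, b2, by rw [← hb, coe_eq_smul_one]⟩
  have Rβ₂ : InSlice I β₂ := ⟨b3, b4, by rw [← hb', coe_eq_smul_one]⟩
  have Rq : InSlice I q := ⟨x, y, hq⟩
  have Rq2 : InSlice I (q ^ 2) := by rw [pow_two]; exact Rq.mul hII Rq
  have Rc : InSlice I (1 - q ^ 2) := InSlice.one.sub Rq2
  -- norms
  have nq : ‖q‖ ^ 2 = x ^ 2 + y ^ 2 := by
    rw [sq, ← Quaternion.normSq_eq_norm_mul_self, hq, slice_normSq I hII hsI]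
  have hq2 : q ^ 2 = ((x * x - y * y : ℝ) : Quaternion ℝ) + (x * y + y * x) • I := by
    rw [pow_two, hq, slice_mul I hII]
  have hcrep : (1 : Quaternion ℝ) - q ^ 2
      = ((1 - (x * x - y * y) : ℝ) : Quaternion ℝ) + (-(x * y + y * x)) • I := by
    rw [hq2]
    push_cast
    rw [neg_smul]
    abel
  have nc : ‖(1 : Quaternion ℝ) - q ^ 2‖ ^ 2
      = (1 - (x * x - y * y)) ^ 2 + (x * y + y * x) ^ 2 := by
    rw [sq, ← Quaternion.normSq_eq_norm_mul_self, hcrep, slice_normSq I hII hsI]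
    ring
  have hIim : I.im = I := by
    have h := Quaternion.re_add_im I
    rw [hIre] at h
    simpa using h
  have nim : ‖q.im‖ ^ 2 = y ^ 2 := by
    have him : q.im = ((0 : ℝ) : Quaternion ℝ) + y • I := by
      rw [hq]
      simp [Quaternion.im_add, Quaternion.im_coe, Quaternion.im_smul, hIim]
    rw [sq, ← Quaternion.normSq_eq_norm_mul_self, him, slice_normSq I hII hsI]
    ring
  have E5 : ‖(1 : Quaternion ℝ) - q ^ 2‖ ^ 2 = (1 - ‖q‖ ^ 2) ^ 2 + 4 * ‖q.im‖ ^ 2 := by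
    rw [nc, nq, nim]; ring
  -- positivity
  have hs0 : (0 : ℝ) < 1 - ‖q‖ ^ 2 := by nlinarith [norm_nonneg q]
  -- decomposition
  have decomp : ∀ γ₁ γ₂ : Quaternion ℝ, InSlice I γ₁ → InSlice I γ₂ →
      (γ₁ + γ₂ * J) - q * (γ₁ + γ₂ * J) * q
        = γ₁ * (1 - q ^ 2) + (1 - ‖q‖ ^ 2) • (γ₂ * J) := by
    intro γ₁ γ₂ R1' R2'
    have t1 : q * γ₁ * q = γ₁ * q ^ 2 := by
      rw [InSlice.comm hII Rq R1', mul_assoc, ← pow_two]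
    have t2 : q * (γ₂ * J) * q = ‖q‖ ^ 2 • (γ₂ * J) := by
      calc q * (γ₂ * J) * q = q * γ₂ * (J * q) := by
            rw [mul_assoc, mul_assoc, mul_assoc]
        _ = γ₂ * q * (star q * J) := by rw [InSlice.comm hII Rq R2', slice_J hsI hJI Rq]
        _ = γ₂ * (q * star q) * J := by rw [mul_assoc, mul_assoc, mul_assoc]
        _ = γ₂ * ((normSq q : ℝ) : Quaternion ℝ) * J := by rw [Quaternion.self_mul_star]
        _ = (normSq q : ℝ) • (γ₂ * J) := by
            rw [Quaternion.mul_coe_eq_smul, smul_mul_assoc]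
        _ = ‖q‖ ^ 2 • (γ₂ * J) := by rw [Quaternion.normSq_eq_norm_mul_self, ← sq]
    rw [mul_add, add_mul, t1, t2, mul_sub, mul_one, sub_smul, one_smul]
    abel
  have Eα : α - q * α * q = α₁ * (1 - q ^ 2) + (1 - ‖q‖ ^ 2) • (α₂ * J) := by
    rw [hα]; exact decomp α₁ α₂ Rα₁ Rα₂
  have Eβ : β - q * β * q = β₁ * (1 - q ^ 2) + (1 - ‖q‖ ^ 2) • (β₂ * J) := by
    rw [hβ]; exact decomp β₁ β₂ Rβ₁ Rβ₂
  have sβJ : star (β₂ * J) = -(β₂ * J) := by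
    rw [star_mul, hsJ, neg_mul, slice_J hsI hJI (Rβ₂.star' hsI), star_star]
  have Eβs : star (β - q * β * q)
      = star (1 - q ^ 2) * star β₁ - (1 - ‖q‖ ^ 2) • (β₂ * J) := by
    rw [Eβ, star_add, star_mul, Quaternion.star_smul, sβJ, smul_neg, ← sub_eq_add_neg]
  -- numerator
  set s : ℝ := 1 - ‖q‖ ^ 2 with hs
  set c : Quaternion ℝ := 1 - q ^ 2 with hc
  have T1 : (α₁ * c * (star c * star β₁)).re = ‖c‖ ^ 2 * (α₁ * star β₁).re := by
    have h1 : α₁ * c * (star c * star β₁) = (normSq c : ℝ) • (α₁ * star β₁) := by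
      rw [← mul_assoc, mul_assoc α₁ c (star c), Quaternion.self_mul_star,
        Quaternion.mul_coe_eq_smul, smul_mul_assoc]
    rw [h1, Quaternion.re_smul, Quaternion.normSq_eq_norm_mul_self, ← sq]
    rfl
  have T2 : (α₁ * c * (s • (β₂ * J))).re = 0 := by
    rw [mul_smul_comm, Quaternion.re_smul, ← mul_assoc,
      slice_re_mul_J hJre hIJre ((Rα₁.mul hII Rc).mul hII Rβ₂), smul_zero]
  have RD : InSlice I (star c * star β₁) :=
    (Rc.star' hsI).mul hII (Rβ₁.star' hsI)
  have T3 : ((s • (α₂ * J)) * (star c * star β₁)).re = 0 := by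
    rw [smul_mul_assoc, Quaternion.re_smul, mul_assoc, slice_J hsI hJI RD,
      ← mul_assoc, slice_re_mul_J hJre hIJre (Rα₂.mul hII (RD.star' hsI)), smul_zero]
  have T4 : ((s • (α₂ * J)) * (s • (β₂ * J))).re
      = s ^ 2 * ((α₂ * J) * (β₂ * J)).re := by
    rw [smul_mul_smul_comm, Quaternion.re_smul, sq, smul_eq_mul]
  have Enum : ((α - q * α * q) * star (β - q * β * q)).re
      = ‖c‖ ^ 2 * (α₁ * star β₁).re - s ^ 2 * ((α₂ * J) * (β₂ * J)).re := by
    have expand : ∀ X Y Z W : Quaternion ℝ,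
        (X + Y) * (Z - W) = X * Z - X * W + (Y * Z - Y * W) := by
      intros; noncomm_ring
    rw [Eα, Eβs, expand]
    simp only [Quaternion.re_sub, Quaternion.re_add]
    rw [T1, T2, T3, T4]
    ring
  have Ere : (α * star β).re = (α₁ * star β₁).re - ((α₂ * J) * (β₂ * J)).re := by
    rw [hα, hβ, star_add, sβJ, mul_add, add_mul, add_mul]
    simp only [Quaternion.re_add, mul_neg, Quaternion.re_neg]
    have u1 : (α₁ * (β₂ * J)).re = 0 := by
      rw [← mul_assoc]; exact slice_re_mul_J hJre hIJre (Rα₁.mul hII Rβ₂)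
    have u2 : ((α₂ * J) * star β₁).re = 0 := by
      rw [mul_assoc, slice_J hsI hJI (Rβ₁.star' hsI), star_star, ← mul_assoc]
      exact slice_re_mul_J hJre hIJre (Rα₂.mul hII Rβ₁)
    rw [u1, u2]
    ring
  -- assemble
  unfold sliceRiemannian
  rw [← hc, ← hs, Enum, Ere, E5]
  have hpos : (0 : ℝ) < s ^ 2 + 4 * ‖q.im‖ ^ 2 := by positivity
  field_simp
  ring
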